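/- arXiv:2105.09056 — 4 statements merged into one kernel-verified Lean document; each statement's English description precedes it below -/
import Mathlib

section
/- Let n ≥ 3, let w > 0, and let D ∈ M_n(ℝ) be the symmetric matrix with zero diagonal, D_{12} = D_{21} = 0, and D_{ij} = 1/w for all other pairs i ≠ j (the complete graph with all weights equal to w except that the edge {1,2} is removed). Then the noncommutative distance satisfies d^D(1,2) = w·sqrt(2/(n−2)). -/
open scoped ENNReal

/-- The operator norm on square matrices induced by the Euclidean (ℓ²) norm. -/
noncomputable def opNorm {ι : Type*} [Finite ι] (M : Matrix ι ι ℂ) : ℝ :=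
  letI := Fintype.ofFinite ι
  letI := Classical.decEq ι
  ‖Matrix.toEuclideanCLM (𝕜 := ℂ) M‖

/-- The commutator `[D, π(a)]` of a matrix with the diagonal matrix of `a`. -/
noncomputable def commD {ι : Type*} [Finite ι] (D : Matrix ι ι ℂ) (a : ι → ℂ) : Matrix ι ι ℂ :=
  letI := Fintype.ofFinite ι
  letI := Classical.decEq ι
  D * Matrix.diagonal a - Matrix.diagonal a * D

/-- Connes' noncommutative distance associated to the Dirac operator `D`. -/
noncomputable def ncDist {ι : Type*} [Finite ι] (D : Matrix ι ι ℂ) (i j : ι) : ℝ≥0∞ :=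
  ⨆ (a : ι → ℂ) (_ : opNorm (commD D a) ≤ 1), ENNReal.ofReal ‖a i - a j‖

/-- The weight of an edge: the inverse of `|D i j|` (infinite if `D i j = 0`). -/
noncomputable def eWeight {ι : Type*} (D : Matrix ι ι ℂ) (u v : ι) : ℝ≥0∞ :=
  (ENNReal.ofReal ‖D u v‖)⁻¹

/-- Adjacency in the graph `G_D`. -/
def Adjac {ι : Type*} (D : Matrix ι ι ℂ) (u v : ι) : Prop := u ≠ v ∧ D u v ≠ 0

/-- The length of a walk `i :: p` computed with weights `eWeight D`. -/
noncomputable def walkLength {ι : Type*} (D : Matrix ι ι ℂ) : ι → List ι → ℝ≥0∞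
  | _, [] => 0
  | u, v :: rest => eWeight D u v + walkLength D v rest

/-- `i :: p` is a walk from `i` to `j` in the graph `G_D`. -/
def IsWalk {ι : Type*} (D : Matrix ι ι ℂ) (i j : ι) (p : List ι) : Prop :=
  List.Chain (Adjac D) i p ∧ (i :: p).getLast (List.cons_ne_nil _ _) = j

/-- `i` and `j` lie in the same connected component of `G_D`. -/
def Conn {ι : Type*} (D : Matrix ι ι ℂ) (i j : ι) : Prop := ∃ p, IsWalk D i j p

/-- The geodesic (weighted shortest-path) distance on `G_D`. -/
noncomputable def gDist {ι : Type*} (D : Matrix ι ι ℂ) (i j : ι) : ℝ≥0∞ :=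
  ⨅ (p : List ι) (_ : IsWalk D i j p), walkLength D i p



section Aux

lemma opNorm_eq {n : ℕ} (M : Matrix (Fin n) (Fin n) ℂ) :
    opNorm M = ‖Matrix.toEuclideanCLM (𝕜 := ℂ) M‖ := by
  unfold opNorm; congr!

lemma opNorm_nonneg' {n : ℕ} (M : Matrix (Fin n) (Fin n) ℂ) : 0 ≤ opNorm M := by
  rw [opNorm_eq]; exact norm_nonneg _

lemma norm_mulVec_le {n : ℕ} (M : Matrix (Fin n) (Fin n) ℂ) (y : Fin n → ℂ) :
    ‖(WithLp.equiv 2 (Fin n → ℂ)).symm (M.mulVec y)‖ ≤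
      opNorm M * ‖(WithLp.equiv 2 (Fin n → ℂ)).symm y‖ := by
  rw [opNorm_eq]
  have : Matrix.toEuclideanCLM (𝕜 := ℂ) M ((WithLp.equiv 2 (Fin n → ℂ)).symm y) =
      (WithLp.equiv 2 (Fin n → ℂ)).symm (M.mulVec y) := rfl
  rw [← this]
  exact (Matrix.toEuclideanCLM (𝕜 := ℂ) M).le_opNorm _

lemma opNorm_le' {n : ℕ} (M : Matrix (Fin n) (Fin n) ℂ) {C : ℝ} (hC : 0 ≤ C)
    (h : ∀ y : Fin n → ℂ, ‖(WithLp.equiv 2 (Fin n → ℂ)).symm (M.mulVec y)‖ ≤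
      C * ‖(WithLp.equiv 2 (Fin n → ℂ)).symm y‖) : opNorm M ≤ C := by
  rw [opNorm_eq]
  apply ContinuousLinearMap.opNorm_le_bound _ hC
  intro x
  exact h (WithLp.equiv 2 (Fin n → ℂ) x)

lemma commD_apply {n : ℕ} (D : Matrix (Fin n) (Fin n) ℂ) (a : Fin n → ℂ) (i j : Fin n) :
    commD D a i j = D i j * (a j - a i) := by
  have h : commD D a = D * Matrix.diagonal a - Matrix.diagonal a * D := by
    unfold commD; congr!
  rw [h]
  simp [Matrix.sub_apply, Matrix.mul_diagonal, Matrix.diagonal_mul]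
  ring
lemma euclid_norm_sq {n : ℕ} (v : Fin n → ℂ) :
    ‖(WithLp.equiv 2 (Fin n → ℂ)).symm v‖ ^ 2 = ∑ i, ‖v i‖ ^ 2 := by
  rw [EuclideanSpace.norm_eq]
  rw [Real.sq_sqrt (by positivity)]
  rfl

variable {n : ℕ} {w : ℝ} {D : Matrix (Fin n) (Fin n) ℂ} {i0 i1 : Fin n}

lemma compl_eq (hne : i0 ≠ i1) :
    (Finset.univ.filter (fun j => ¬(j = i0 ∨ j = i1))) = ({i0, i1} : Finset (Fin n))ᶜ := by
  ext j; simp [not_or]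

lemma compl_card (hn : 3 ≤ n) (hne : i0 ≠ i1) :
    (Finset.univ.filter (fun j => ¬(j = i0 ∨ j = i1))).card = n - 2 := by
  rw [compl_eq hne, Finset.card_compl, Finset.card_pair hne]
  simp

lemma upper_bound (hn : 3 ≤ n) (hw : 0 < w) (hne : i0 ≠ i1)
    (hDd : ∀ i, D i i = 0) (hD01 : D i0 i1 = 0) (hD10 : D i1 i0 = 0)
    (hDo : ∀ i j : Fin n, i ≠ j → ¬(i = i0 ∧ j = i1) → ¬(i = i1 ∧ j = i0) →
      D i j = ((w⁻¹ : ℝ) : ℂ))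
    (a : Fin n → ℂ) (ha : opNorm (commD D a) ≤ 1) :
    ‖a i0 - a i1‖ ≤ w * Real.sqrt (2 / ((n : ℝ) - 2)) := by
  set M := commD D a with hMdef
  set y : Fin n → ℂ := fun k => if k = i0 ∨ k = i1 then 0 else 1 with hy
  set z := M.mulVec y with hz
  set N : ℝ := (n : ℝ) - 2 with hN
  have hn3 : (3:ℝ) ≤ (n:ℝ) := by exact_mod_cast hn
  have hN1 : 1 ≤ N := by rw [hN]; linarith
  have hN0 : 0 < N := by linarith
  have hcard := compl_card hn hne
  have hcardR : ((n - 2 : ℕ) : ℝ) = N := by rw [hN]; push_cast [Nat.cast_sub (by omega : 2 ≤ n)]; ring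
  -- compute z i0 - z i1
  have hdiff : z i0 - z i1 = ((n : ℂ) - 2) * ((w⁻¹ : ℝ) : ℂ) * (a i1 - a i0) := by
    rw [hz]
    simp only [Matrix.mulVec, dotProduct]
    rw [← Finset.sum_sub_distrib]
    have hterm : ∀ j : Fin n, M i0 j * y j - M i1 j * y j =
        if j = i0 ∨ j = i1 then 0 else ((w⁻¹ : ℝ) : ℂ) * (a i1 - a i0) := by
      intro j
      by_cases h0 : j = i0
      · simp [hy, h0]
      by_cases h1 : j = i1
      · simp [hy, h1]
      · have e0 : M i0 j = ((w⁻¹ : ℝ) : ℂ) * (a j - a i0) := by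
          rw [hMdef, commD_apply, hDo i0 j (fun h => h0 h.symm) (by tauto) (by tauto)]
        have e1 : M i1 j = ((w⁻¹ : ℝ) : ℂ) * (a j - a i1) := by
          rw [hMdef, commD_apply, hDo i1 j (fun h => h1 h.symm) (by tauto) (by tauto)]
        simp only [hy, h0, h1, or_self, if_false, e0, e1]
        ring
    rw [Finset.sum_congr rfl (fun j _ => hterm j)]
    rw [Finset.sum_ite, Finset.sum_const_zero, zero_add, Finset.sum_const, nsmul_eq_mul, hcard]
    push_cast [Nat.cast_sub (by omega : 2 ≤ n)]
    ring
  -- norm of y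
  have hny : ‖(WithLp.equiv 2 (Fin n → ℂ)).symm y‖ = Real.sqrt N := by
    rw [EuclideanSpace.norm_eq]
    congr 1
    have : ∀ j : Fin n, ‖((WithLp.equiv 2 (Fin n → ℂ)).symm y) j‖ ^ 2 =
        if j = i0 ∨ j = i1 then 0 else 1 := by
      intro j
      by_cases h : j = i0 ∨ j = i1 <;> simp [hy, h]
    rw [Finset.sum_congr rfl (fun j _ => this j)]
    rw [Finset.sum_ite, Finset.sum_const_zero, zero_add, Finset.sum_const, nsmul_eq_mul, hcard,
      mul_one, hcardR]
  -- norm of z bounded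
  have hnz : ‖(WithLp.equiv 2 (Fin n → ℂ)).symm z‖ ≤ Real.sqrt N := by
    calc ‖(WithLp.equiv 2 (Fin n → ℂ)).symm z‖ ≤
        opNorm M * ‖(WithLp.equiv 2 (Fin n → ℂ)).symm y‖ := norm_mulVec_le M y
      _ ≤ 1 * Real.sqrt N := by
          rw [hny]; exact mul_le_mul_of_nonneg_right ha (Real.sqrt_nonneg _)
      _ = Real.sqrt N := one_mul _
  have hsq : ‖z i0‖ ^ 2 + ‖z i1‖ ^ 2 ≤ N := by
    have h1 : ‖z i0‖ ^ 2 + ‖z i1‖ ^ 2 ≤ ∑ i, ‖z i‖ ^ 2 := by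
      have := Finset.sum_le_sum_of_subset_of_nonneg (f := fun i => ‖z i‖ ^ 2)
        (Finset.subset_univ ({i0, i1} : Finset (Fin n)))
        (fun i _ _ => by positivity)
      rwa [Finset.sum_pair hne] at this
    have h2 : ∑ i, ‖z i‖ ^ 2 ≤ N := by
      rw [← euclid_norm_sq]
      calc ‖(WithLp.equiv 2 (Fin n → ℂ)).symm z‖ ^ 2 ≤ Real.sqrt N ^ 2 := by
            apply sq_le_sq' _ hnz
            linarith [norm_nonneg ((WithLp.equiv 2 (Fin n → ℂ)).symm z), Real.sqrt_nonneg N]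
        _ = N := Real.sq_sqrt hN0.le
    linarith
  -- combine
  set b : ℝ := ‖a i0 - a i1‖ with hb
  have hb0 : 0 ≤ b := norm_nonneg _
  have hd : N * w⁻¹ * b = ‖z i0 - z i1‖ := by
    rw [hdiff]
    rw [norm_mul, norm_mul]
    have : ‖a i1 - a i0‖ = b := norm_sub_rev _ _
    rw [this]
    have h1 : ‖((n : ℂ) - 2)‖ = N := by
      have he : ((n : ℂ) - 2) = (((n : ℝ) - 2 : ℝ) : ℂ) := by push_cast; ring
      rw [he, Complex.norm_real, Real.norm_eq_abs, ← hN, abs_of_pos hN0]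
    have h2 : ‖((w⁻¹ : ℝ) : ℂ)‖ = w⁻¹ := by
      rw [Complex.norm_real, Real.norm_eq_abs, abs_of_pos (by positivity)]
    rw [h1, h2]
  have hkey : N * w⁻¹ * b ≤ ‖z i0‖ + ‖z i1‖ := hd ▸ norm_sub_le _ _
  have hb2 : b ^ 2 ≤ 2 * w ^ 2 / N := by
    have hnn : 0 ≤ N * w⁻¹ * b := by positivity
    have h2 : (N * w⁻¹ * b) ^ 2 ≤ 2 * N := by
      nlinarith [mul_self_le_mul_self hnn hkey, hsq, sq_nonneg (‖z i0‖ - ‖z i1‖)]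
    have step1 : N ^ 2 * b ^ 2 ≤ 2 * N * w ^ 2 := by
      have h3 := mul_le_mul_of_nonneg_right h2 (sq_nonneg w)
      have he : (N * w⁻¹ * b) ^ 2 * w ^ 2 = N ^ 2 * b ^ 2 := by
        field_simp
      linarith [h3, he ▸ h3]
    rw [le_div_iff₀ hN0]
    nlinarith [step1, hN0]
  have hfin : b ≤ Real.sqrt (2 * w ^ 2 / N) := (Real.le_sqrt hb0 (by positivity)).mpr hb2
  calc b ≤ Real.sqrt (2 * w ^ 2 / N) := hfin
    _ = w * Real.sqrt (2 / N) := by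
        rw [show (2 * w ^ 2 / N) = w ^ 2 * (2 / N) by ring, Real.sqrt_mul (by positivity),
          Real.sqrt_sq hw.le]


lemma lower_bound (hn : 3 ≤ n) (hw : 0 < w) (hne : i0 ≠ i1)
    (hDd : ∀ i, D i i = 0) (hD01 : D i0 i1 = 0) (hD10 : D i1 i0 = 0)
    (hDo : ∀ i j : Fin n, i ≠ j → ¬(i = i0 ∧ j = i1) → ¬(i = i1 ∧ j = i0) →
      D i j = ((w⁻¹ : ℝ) : ℂ)) :
    ∃ a : Fin n → ℂ, opNorm (commD D a) ≤ 1 ∧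
      ‖a i0 - a i1‖ = w * Real.sqrt (2 / ((n : ℝ) - 2)) := by
  set N : ℝ := (n : ℝ) - 2 with hN
  have hn3 : (3:ℝ) ≤ (n:ℝ) := by exact_mod_cast hn
  have hN0 : 0 < N := by rw [hN]; linarith
  have hcardR : ((n - 2 : ℕ) : ℝ) = N := by
    rw [hN]; push_cast [Nat.cast_sub (by omega : 2 ≤ n)]; ring
  set c : ℝ := w * Real.sqrt (2 / N) / 2 with hc
  have hc0 : 0 ≤ c := by positivity
  set κ : ℝ := w⁻¹ * c with hκ
  have hκ0 : 0 ≤ κ := by positivity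
  have hκval : κ = Real.sqrt (2 / N) / 2 := by
    rw [hκ, hc]; field_simp
  have hκ2 : 2 * N * κ ^ 2 = 1 := by
    have hs : Real.sqrt (2 / N) ^ 2 = 2 / N := Real.sq_sqrt (by positivity)
    rw [hκval, div_pow, hs]
    field_simp
  set a : Fin n → ℂ := fun k => if k = i0 then (c : ℂ) else if k = i1 then (-c : ℂ) else 0
    with haa
  have hai0 : a i0 = (c : ℂ) := by simp [haa]
  have hai1 : a i1 = (-c : ℂ) := by simp [haa, hne.symm]
  have haother : ∀ k, k ≠ i0 → k ≠ i1 → a k = 0 := by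
    intro k h0 h1; simp [haa, h0, h1]
  refine ⟨a, ?_, ?_⟩
  · -- opNorm bound
    set M := commD D a with hM
    apply opNorm_le' M (by norm_num)
    intro y
    rw [one_mul, EuclideanSpace.norm_eq, EuclideanSpace.norm_eq]
    apply Real.sqrt_le_sqrt
    simp only [WithLp.equiv_symm_apply, PiLp.toLp_apply]
    set T : Finset (Fin n) := Finset.univ.filter (fun j => ¬(j = i0 ∨ j = i1)) with hT
    set S : ℂ := ∑ j ∈ T, y j with hS
    set z := M.mulVec y with hzdef
    -- entry computations
    have hz0 : z i0 = -(κ : ℂ) * S := by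
      rw [hzdef]
      simp only [Matrix.mulVec, dotProduct]
      have hterm : ∀ j : Fin n, M i0 j * y j =
          if j = i0 ∨ j = i1 then 0 else -(κ : ℂ) * y j := by
        intro j
        by_cases h0 : j = i0
        · simp [hM, commD_apply, h0, hDd]
        by_cases h1 : j = i1
        · simp [hM, commD_apply, h1, hD01]
        · rw [hM, commD_apply, hDo i0 j (fun h => h0 h.symm) (by tauto) (by tauto),
            haother j h0 h1, hai0]
          simp only [h0, h1, or_self, if_false]
          push_cast [hκ]
          ring
      rw [Finset.sum_congr rfl (fun j _ => hterm j), Finset.sum_ite, Finset.sum_const_zero,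
        zero_add, ← hT, ← Finset.mul_sum, ← hS]
    have hz1 : z i1 = (κ : ℂ) * S := by
      rw [hzdef]
      simp only [Matrix.mulVec, dotProduct]
      have hterm : ∀ j : Fin n, M i1 j * y j =
          if j = i0 ∨ j = i1 then 0 else (κ : ℂ) * y j := by
        intro j
        by_cases h0 : j = i0
        · simp [hM, commD_apply, h0, hD10]
        by_cases h1 : j = i1
        · simp [hM, commD_apply, h1, hDd]
        · rw [hM, commD_apply, hDo i1 j (fun h => h1 h.symm) (by tauto) (by tauto),
            haother j h0 h1, hai1]
          simp only [h0, h1, or_self, if_false]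
          push_cast [hκ]
          ring
      rw [Finset.sum_congr rfl (fun j _ => hterm j), Finset.sum_ite, Finset.sum_const_zero,
        zero_add, ← hT, ← Finset.mul_sum, ← hS]
    have hzk : ∀ k : Fin n, k ≠ i0 → k ≠ i1 → z k = (κ : ℂ) * (y i0 - y i1) := by
      intro k h0 h1
      rw [hzdef]
      simp only [Matrix.mulVec, dotProduct]
      have hterm : ∀ j : Fin n, M k j * y j =
          (if j = i0 then (κ : ℂ) * y i0 else 0) + (if j = i1 then -(κ : ℂ) * y i1 else 0) := by
        intro j
        by_cases hj0 : j = i0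
        · rw [hj0]
          rw [hM, commD_apply, hDo k i0 h0 (by tauto) (by tauto), hai0, haother k h0 h1,
            if_pos rfl, if_neg hne]
          push_cast [hκ]
          ring
        by_cases hj1 : j = i1
        · rw [hj1]
          rw [hM, commD_apply, hDo k i1 h1 (by tauto) (by tauto), hai1, haother k h0 h1,
            if_neg (Ne.symm hne), if_pos rfl]
          push_cast [hκ]
          ring
        by_cases hjk : j = k
        · rw [hjk, hM, commD_apply, hDd, if_neg h0, if_neg h1]
          simp
        · rw [hM, commD_apply, haother j hj0 hj1, haother k h0 h1, if_neg hj0, if_neg hj1]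
          simp
      rw [Finset.sum_congr rfl (fun j _ => hterm j), Finset.sum_add_distrib,
        Finset.sum_ite_eq' Finset.univ i0, Finset.sum_ite_eq' Finset.univ i1]
      simp only [Finset.mem_univ, if_true]
      ring
    -- norms of entries
    have hnz0 : ‖z i0‖ ^ 2 = κ ^ 2 * ‖S‖ ^ 2 := by
      rw [hz0, norm_mul, norm_neg, Complex.norm_real, Real.norm_eq_abs, abs_of_nonneg hκ0]
      ring
    have hnz1 : ‖z i1‖ ^ 2 = κ ^ 2 * ‖S‖ ^ 2 := by
      rw [hz1, norm_mul, Complex.norm_real, Real.norm_eq_abs, abs_of_nonneg hκ0]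
      ring
    have hnzk : ∀ k : Fin n, k ∈ T → ‖z k‖ ^ 2 = κ ^ 2 * ‖y i0 - y i1‖ ^ 2 := by
      intro k hk
      rw [hT] at hk
      simp only [Finset.mem_filter, Finset.mem_univ, true_and, not_or] at hk
      rw [hzk k hk.1 hk.2, norm_mul, Complex.norm_real, Real.norm_eq_abs, abs_of_nonneg hκ0]
      ring
    -- sum splits
    have hsplit : ∀ f : Fin n → ℝ, ∑ i, f i = f i0 + f i1 + ∑ j ∈ T, f j := by
      intro f
      rw [hT, compl_eq hne, ← Finset.sum_add_sum_compl ({i0, i1} : Finset (Fin n)) f,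
        Finset.sum_pair hne]
    rw [hsplit (fun i => ‖z i‖ ^ 2), hsplit (fun i => ‖y i‖ ^ 2)]
    rw [hnz0, hnz1, Finset.sum_congr rfl hnzk, Finset.sum_const, nsmul_eq_mul]
    have hcardT : (T.card : ℝ) = N := by rw [hT, compl_card hn hne, hcardR]
    rw [hcardT]
    -- inequalities
    have hSbound : ‖S‖ ^ 2 ≤ N * ∑ j ∈ T, ‖y j‖ ^ 2 := by
      have h1 : ‖S‖ ≤ ∑ j ∈ T, ‖y j‖ := (norm_sum_le T y)
      have h2 : (∑ j ∈ T, ‖y j‖) ^ 2 ≤ T.card * ∑ j ∈ T, ‖y j‖ ^ 2 :=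
        sq_sum_le_card_mul_sum_sq
      have h3 : ‖S‖ ^ 2 ≤ (∑ j ∈ T, ‖y j‖) ^ 2 :=
        mul_self_le_mul_self (norm_nonneg _) h1 |>.trans_eq (by ring) |>.trans_eq' (by ring)
      calc ‖S‖ ^ 2 ≤ (∑ j ∈ T, ‖y j‖) ^ 2 := h3
        _ ≤ T.card * ∑ j ∈ T, ‖y j‖ ^ 2 := h2
        _ = N * ∑ j ∈ T, ‖y j‖ ^ 2 := by rw [hcardT]
    have hy01 : ‖y i0 - y i1‖ ^ 2 ≤ 2 * (‖y i0‖ ^ 2 + ‖y i1‖ ^ 2) := by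
      have h1 : ‖y i0 - y i1‖ ≤ ‖y i0‖ + ‖y i1‖ := norm_sub_le _ _
      nlinarith [norm_nonneg (y i0 - y i1), norm_nonneg (y i0), norm_nonneg (y i1),
        sq_nonneg (‖y i0‖ - ‖y i1‖)]
    have e1 := mul_le_mul_of_nonneg_left hSbound (by positivity : (0:ℝ) ≤ 2 * κ ^ 2)
    have e2 := mul_le_mul_of_nonneg_left hy01 (by positivity : (0:ℝ) ≤ N * κ ^ 2)
    have e3 : (2 * N * κ ^ 2) * (∑ j ∈ T, ‖y j‖ ^ 2) = ∑ j ∈ T, ‖y j‖ ^ 2 := by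
      rw [hκ2]; ring
    have e4 : (2 * N * κ ^ 2) * (‖y i0‖ ^ 2 + ‖y i1‖ ^ 2) = ‖y i0‖ ^ 2 + ‖y i1‖ ^ 2 := by
      rw [hκ2]; ring
    nlinarith [e1, e2, e3, e4]
  · -- the value
    rw [hai0, hai1]
    have : (c : ℂ) - (-c : ℂ) = ((2 * c : ℝ) : ℂ) := by push_cast; ring
    rw [this, Complex.norm_real, Real.norm_eq_abs, abs_of_nonneg (by positivity), hc]
    ring

end Aux

theorem stmt9 {n : ℕ} (hn : 3 ≤ n) (w : ℝ) (hw : 0 < w)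
    (D : Matrix (Fin n) (Fin n) ℂ)
    (hD : D = Matrix.of fun i j =>
      if i = j then 0
      else if (i = (⟨0, by omega⟩ : Fin n) ∧ j = (⟨1, by omega⟩ : Fin n)) ∨
              (i = (⟨1, by omega⟩ : Fin n) ∧ j = (⟨0, by omega⟩ : Fin n)) then 0
      else (((w⁻¹ : ℝ)) : ℂ)) :
    ncDist D ⟨0, by omega⟩ ⟨1, by omega⟩ =
      ENNReal.ofReal (w * Real.sqrt (2 / ((n : ℝ) - 2))) := by
  set i0 : Fin n := ⟨0, by omega⟩ with hi0
  set i1 : Fin n := ⟨1, by omega⟩ with hi1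
  have hne : i0 ≠ i1 := by
    simp [hi0, hi1, Fin.ext_iff]
  have hDd : ∀ i, D i i = 0 := by intro i; rw [hD]; simp
  have hD01 : D i0 i1 = 0 := by
    rw [hD]; simp [Matrix.of_apply, hne]
  have hD10 : D i1 i0 = 0 := by
    rw [hD]; simp [Matrix.of_apply, hne.symm]
  have hDo : ∀ i j : Fin n, i ≠ j → ¬(i = i0 ∧ j = i1) → ¬(i = i1 ∧ j = i0) →
      D i j = ((w⁻¹ : ℝ) : ℂ) := by
    intro i j hij h1 h2
    rw [hD]
    simp only [Matrix.of_apply, if_neg hij, if_neg (by tauto : ¬((i = i0 ∧ j = i1) ∨ (i = i1 ∧ j = i0)))]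
  unfold ncDist
  apply le_antisymm
  · apply iSup₂_le
    intro a ha
    exact ENNReal.ofReal_le_ofReal (upper_bound hn hw hne hDd hD01 hD10 hDo a ha)
  · obtain ⟨a, ha, hval⟩ := lower_bound hn hw hne hDd hD01 hD10 hDo
    calc ENNReal.ofReal (w * Real.sqrt (2 / ((n : ℝ) - 2)))
        = ENNReal.ofReal ‖a i0 - a i1‖ := by rw [hval]
      _ ≤ ⨆ (a : Fin n → ℂ) (_ : opNorm (commD D a) ≤ 1), ENNReal.ofReal ‖a i0 - a i1‖ :=
          le_iSup₂ (f := fun (a : Fin n → ℂ) (_ : opNorm (commD D a) ≤ 1) =>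
            ENNReal.ofReal ‖a i0 - a i1‖) a ha
end

section
/- Let w₁, w₂ > 0 and let D ∈ M_3(ℝ) be the Dirac operator of the chain w₁−w₂, i.e. D_{12} = D_{21} = 1/w₁, D_{23} = D_{32} = 1/w₂ and all other entries 0. Then the noncommutative length satisfies λ(w₁−w₂) = d^D(1,3) = sqrt(w₁² + w₂²). -/
open scoped ENNReal

/- ### Auxiliary lemmas -/

lemma my_opNorm_eq {ι : Type*} [Fintype ι] [DecidableEq ι] (M : Matrix ι ι ℂ) :
    opNorm M = ‖Matrix.toEuclideanCLM (𝕜 := ℂ) M‖ := by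
  unfold opNorm
  congr!

lemma my_commD_eq {ι : Type*} [Fintype ι] [DecidableEq ι] (D : Matrix ι ι ℂ) (a : ι → ℂ) :
    commD D a = D * Matrix.diagonal a - Matrix.diagonal a * D := by
  unfold commD
  congr!

lemma my_commD_apply {ι : Type*} [Fintype ι] [DecidableEq ι] (D : Matrix ι ι ℂ) (a : ι → ℂ)
    (i j : ι) : commD D a i j = D i j * (a j - a i) := by
  rw [my_commD_eq, Matrix.sub_apply, Matrix.mul_diagonal, Matrix.diagonal_mul]
  ring

lemma my_tri_norm_le (x y : ℝ) (hxy : x^2 + y^2 ≤ 1) :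
    ‖Matrix.toEuclideanCLM (𝕜 := ℂ)
      !![0, (x:ℂ), 0; (-(x:ℂ)), 0, (y:ℂ); 0, (-(y:ℂ)), 0]‖ ≤ 1 := by
  apply ContinuousLinearMap.opNorm_le_bound _ zero_le_one
  intro v
  set u : Fin 3 → ℂ := WithLp.equiv 2 _ v with hu
  have hv : v = (WithLp.equiv 2 _).symm u := rfl
  rw [hv, (show ∀ (A : Matrix (Fin 3) (Fin 3) ℂ) (z : Fin 3 → ℂ), Matrix.toEuclideanCLM (𝕜 := ℂ) A ((WithLp.equiv 2 _).symm z) = (WithLp.equiv 2 _).symm (A.mulVec z) from fun _ _ => rfl)]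
  have hmv : (!![0, (x:ℂ), 0; (-(x:ℂ)), 0, (y:ℂ); 0, (-(y:ℂ)), 0]).mulVec u
      = ![x * u 1, -(x:ℂ) * u 0 + y * u 2, -(y:ℂ) * u 1] := by
    funext i
    fin_cases i <;>
      simp [Matrix.mulVec, dotProduct, Fin.sum_univ_three]
  rw [hmv]
  rw [EuclideanSpace.norm_eq, EuclideanSpace.norm_eq]
  simp only [WithLp.equiv_symm_apply, PiLp.toLp_apply, Fin.sum_univ_three, one_mul,
    Matrix.cons_val_zero, Matrix.cons_val_one, Matrix.head_cons,
    Matrix.cons_val_two, Matrix.tail_cons]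
  apply Real.sqrt_le_sqrt
  have e0 : ‖(x:ℂ) * u 1‖ = |x| * ‖u 1‖ := by
    rw [norm_mul, Complex.norm_real, Real.norm_eq_abs]
  have e2 : ‖-(y:ℂ) * u 1‖ = |y| * ‖u 1‖ := by
    rw [norm_mul, norm_neg, Complex.norm_real, Real.norm_eq_abs]
  have e1 : ‖-(x:ℂ) * u 0 + (y:ℂ) * u 2‖ ≤ |x| * ‖u 0‖ + |y| * ‖u 2‖ := by
    calc ‖-(x:ℂ) * u 0 + (y:ℂ) * u 2‖ ≤ ‖-(x:ℂ) * u 0‖ + ‖(y:ℂ) * u 2‖ := norm_add_le _ _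
    _ = |x| * ‖u 0‖ + |y| * ‖u 2‖ := by
        rw [norm_mul, norm_mul, norm_neg, Complex.norm_real, Complex.norm_real,
          Real.norm_eq_abs, Real.norm_eq_abs]
  have e1' : ‖-(x:ℂ) * u 0 + (y:ℂ) * u 2‖^2 ≤ (|x| * ‖u 0‖ + |y| * ‖u 2‖)^2 :=
    pow_le_pow_left₀ (norm_nonneg _) e1 2
  rw [e0, e2]
  have hx2 : |x|^2 = x^2 := sq_abs x
  have hy2 : |y|^2 = y^2 := sq_abs y
  nlinarith [sq_nonneg (|x| * ‖u 2‖ - |y| * ‖u 0‖), sq_nonneg (‖u 1‖), norm_nonneg (u 0),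
    norm_nonneg (u 1), norm_nonneg (u 2), abs_nonneg x, abs_nonneg y, sq_nonneg (‖u 0‖),
    sq_nonneg (‖u 2‖)]

lemma my_col_sq_le_one (M : Matrix (Fin 3) (Fin 3) ℂ)
    (hM : ‖Matrix.toEuclideanCLM (𝕜 := ℂ) M‖ ≤ 1) :
    ‖M 0 1‖^2 + ‖M 1 1‖^2 + ‖M 2 1‖^2 ≤ 1 := by
  set e1 : EuclideanSpace ℂ (Fin 3) := (WithLp.equiv 2 _).symm ![0, 1, 0] with he1
  have hne : ‖e1‖ = 1 := by
    rw [he1, EuclideanSpace.norm_eq]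
    simp [Fin.sum_univ_three]
  have h := (Matrix.toEuclideanCLM (𝕜 := ℂ) M).le_opNorm e1
  rw [hne, mul_one] at h
  have h2 : ‖Matrix.toEuclideanCLM (𝕜 := ℂ) M e1‖ ≤ 1 := h.trans hM
  rw [he1, (show ∀ (A : Matrix (Fin 3) (Fin 3) ℂ) (z : Fin 3 → ℂ), Matrix.toEuclideanCLM (𝕜 := ℂ) A ((WithLp.equiv 2 _).symm z) = (WithLp.equiv 2 _).symm (A.mulVec z) from fun _ _ => rfl)] at h2
  have hmv : M.mulVec ![0, 1, 0] = ![M 0 1, M 1 1, M 2 1] := by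
    funext i
    fin_cases i <;> simp [Matrix.mulVec, dotProduct, Fin.sum_univ_three]
  rw [hmv, EuclideanSpace.norm_eq] at h2
  simp only [WithLp.equiv_symm_apply, PiLp.toLp_apply, Fin.sum_univ_three, Matrix.cons_val_zero,
    Matrix.cons_val_one, Matrix.head_cons, Matrix.cons_val_two, Matrix.tail_cons] at h2
  have hS : (0:ℝ) ≤ ‖M 0 1‖^2 + ‖M 1 1‖^2 + ‖M 2 1‖^2 := by positivity
  nlinarith [Real.sq_sqrt hS, Real.sqrt_nonneg (‖M 0 1‖^2 + ‖M 1 1‖^2 + ‖M 2 1‖^2)]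

theorem stmt10 (w₁ w₂ : ℝ) (h1 : 0 < w₁) (h2 : 0 < w₂) :
    ncDist !![0, ((w₁⁻¹ : ℝ) : ℂ), 0;
              ((w₁⁻¹ : ℝ) : ℂ), 0, ((w₂⁻¹ : ℝ) : ℂ);
              0, ((w₂⁻¹ : ℝ) : ℂ), 0] 0 2 =
      ENNReal.ofReal (Real.sqrt (w₁ ^ 2 + w₂ ^ 2)) := by
  set D : Matrix (Fin 3) (Fin 3) ℂ :=
    !![0, ((w₁⁻¹ : ℝ) : ℂ), 0;
       ((w₁⁻¹ : ℝ) : ℂ), 0, ((w₂⁻¹ : ℝ) : ℂ);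
       0, ((w₂⁻¹ : ℝ) : ℂ), 0] with hD
  set L : ℝ := Real.sqrt (w₁ ^ 2 + w₂ ^ 2) with hLdef
  have hL : 0 < L := Real.sqrt_pos.mpr (by positivity)
  have hL2 : L ^ 2 = w₁ ^ 2 + w₂ ^ 2 := Real.sq_sqrt (by positivity)
  apply le_antisymm
  · -- upper bound
    apply iSup₂_le
    intro a ha
    apply ENNReal.ofReal_le_ofReal
    rw [my_opNorm_eq] at ha
    have hcol := my_col_sq_le_one (commD D a) ha
    have hM01 : commD D a 0 1 = ((w₁⁻¹ : ℝ) : ℂ) * (a 1 - a 0) := by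
      rw [my_commD_apply]; simp [hD]
    have hM11 : commD D a 1 1 = 0 := by
      rw [my_commD_apply]; simp [hD]
    have hM21 : commD D a 2 1 = ((w₂⁻¹ : ℝ) : ℂ) * (a 1 - a 2) := by
      rw [my_commD_apply]; simp [hD]
    rw [hM01, hM11, hM21, norm_zero, norm_mul, norm_mul, Complex.norm_real,
      Complex.norm_real, Real.norm_eq_abs, Real.norm_eq_abs,
      abs_of_pos (inv_pos.mpr h1), abs_of_pos (inv_pos.mpr h2)] at hcol
    set p := ‖a 1 - a 0‖ with hp
    set q := ‖a 1 - a 2‖ with hq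
    have hp0 : 0 ≤ p := norm_nonneg _
    have hq0 : 0 ≤ q := norm_nonneg _
    have htri : ‖a 0 - a 2‖ ≤ p + q := by
      have heq : a 0 - a 2 = -(a 1 - a 0) + (a 1 - a 2) := by ring
      rw [heq]
      calc ‖-(a 1 - a 0) + (a 1 - a 2)‖ ≤ ‖-(a 1 - a 0)‖ + ‖a 1 - a 2‖ := norm_add_le _ _
      _ = p + q := by rw [norm_neg]
    refine htri.trans ?_
    -- from hcol : (w₁⁻¹ * p)^2 + 0^2 + (w₂⁻¹ * q)^2 ≤ 1
    have hcol' : p ^ 2 / w₁ ^ 2 + q ^ 2 / w₂ ^ 2 ≤ 1 := by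
      have e1 : (w₁⁻¹ * p) ^ 2 = p ^ 2 / w₁ ^ 2 := by
        rw [mul_pow, inv_pow]; ring
      have e2 : (w₂⁻¹ * q) ^ 2 = q ^ 2 / w₂ ^ 2 := by
        rw [mul_pow, inv_pow]; ring
      nlinarith [hcol]
    have hcol'' : p ^ 2 * w₂ ^ 2 + q ^ 2 * w₁ ^ 2 ≤ w₁ ^ 2 * w₂ ^ 2 := by
      rw [div_add_div _ _ (by positivity) (by positivity), div_le_one (by positivity)] at hcol'
      linarith
    have hsq : (p + q) ^ 2 ≤ w₁ ^ 2 + w₂ ^ 2 := by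
      nlinarith [sq_nonneg (p * w₂ ^ 2 - q * w₁ ^ 2), mul_pos (mul_pos h1 h1) (mul_pos h2 h2),
        mul_le_mul_of_nonneg_left hcol'' (by positivity : (0:ℝ) ≤ w₁ ^ 2 + w₂ ^ 2)]
    rw [hLdef]
    exact (Real.le_sqrt (add_nonneg hp0 hq0) (by positivity)).mpr hsq
  · -- lower bound: witness
    set a : Fin 3 → ℂ := ![0, ((w₁ ^ 2 / L : ℝ) : ℂ), ((L : ℝ) : ℂ)] with ha
    have hLC : ((L : ℂ)) ^ 2 = (w₁ : ℂ) ^ 2 + (w₂ : ℂ) ^ 2 := by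
      exact_mod_cast congrArg (fun r : ℝ => (r : ℂ)) hL2
    have hM : commD D a =
        !![0, (((w₁ / L : ℝ)) : ℂ), 0;
           (-(((w₁ / L : ℝ)) : ℂ)), 0, (((w₂ / L : ℝ)) : ℂ);
           0, (-(((w₂ / L : ℝ)) : ℂ)), 0] := by
      have hw1 : (w₁ : ℂ) ≠ 0 := by exact_mod_cast h1.ne'
      have hw2 : (w₂ : ℂ) ≠ 0 := by exact_mod_cast h2.ne'
      have hLn : (L : ℂ) ≠ 0 := by exact_mod_cast hL.ne'
      funext i j
      fin_cases i <;> fin_cases j <;>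
        rw [my_commD_apply] <;>
        simp [hD, ha] <;>
        push_cast <;>
        field_simp
      all_goals
        first
          | ring1
          | linear_combination ((L:ℂ)) * hLC
          | linear_combination (-((L:ℂ))) * hLC
          | linear_combination hLC
          | linear_combination (-1 : ℂ) * hLC
    have hnorm : opNorm (commD D a) ≤ 1 := by
      rw [my_opNorm_eq, hM]
      apply my_tri_norm_le
      have : (w₁ / L) ^ 2 + (w₂ / L) ^ 2 = 1 := by
        rw [div_pow, div_pow, ← add_div, hL2, div_self (by positivity)]
      rw [this]
    have hval : ENNReal.ofReal L = ENNReal.ofReal ‖a 0 - a 2‖ := by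
      have : a 0 - a 2 = -((L : ℝ) : ℂ) := by simp [ha]
      rw [this, norm_neg, Complex.norm_real, Real.norm_eq_abs, abs_of_pos hL]
    rw [hval]
    exact le_iSup₂ (f := fun (b : Fin 3 → ℂ) (_ : opNorm (commD D b) ≤ 1) =>
      ENNReal.ofReal ‖b 0 - b 2‖) a hnorm
end

section
/- Let D and D' be Hermitian Dirac operators with zero diagonal on n vertices which agree on all entries except on the pairs (i_s,j_s) and (j_s,i_s) for s = 1,…,k, where the edges {i_1,j_1},…,{i_k,j_k} are pairwise vertex-disjoint, D'_{i_s j_s} = 0, and |D_{i_s j_s}| = 1/w_s with w_s > 0 (so D' is obtained from D by deleting the k unconnected edges of weights w_s). Assume both graphs G_D and G_{D'} are connected. Set m = max_{1≤s≤k} d^D(i_s,j_s)/w_s and m' = max_{1≤s≤k} d^{D'}(i_s,j_s)/w_s. Then for all vertices x, y: d^D(x,y)/(1+m) ≤ d^{D'}(x,y) ≤ (1+m')·d^D(x,y). -/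
open scoped ENNReal

set_option synthInstance.maxHeartbeats 1000000
set_option maxHeartbeats 1000000

section Aux

lemma opNorm_nonneg'_s13 {ι : Type*} [Finite ι] (M : Matrix ι ι ℂ) : 0 ≤ opNorm M := by
  letI := Fintype.ofFinite ι
  letI := Classical.decEq ι
  unfold opNorm; exact norm_nonneg _

lemma opNorm_add_le {ι : Type*} [Finite ι] (M N : Matrix ι ι ℂ) :
    opNorm (M + N) ≤ opNorm M + opNorm N := by
  letI := Fintype.ofFinite ι
  letI := Classical.decEq ι
  unfold opNorm
  rw [map_add]
  exact norm_add_le _ _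

lemma opNorm_smul {ι : Type*} [Finite ι] (c : ℂ) (M : Matrix ι ι ℂ) :
    opNorm (c • M) = ‖c‖ * opNorm M := by
  letI := Fintype.ofFinite ι
  letI := Classical.decEq ι
  unfold opNorm
  rw [map_smul]
  exact norm_smul (β := EuclideanSpace ℂ ι →L[ℂ] EuclideanSpace ℂ ι) c
    (Matrix.toEuclideanCLM (𝕜 := ℂ) M)

lemma commD_add {ι : Type*} [Finite ι] (E F : Matrix ι ι ℂ) (a : ι → ℂ) :
    commD (E + F) a = commD E a + commD F a := by
  letI := Fintype.ofFinite ι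
  letI := Classical.decEq ι
  unfold commD
  simp only [add_mul, mul_add]
  abel

lemma commD_smul {ι : Type*} [Finite ι] (c : ℂ) (D : Matrix ι ι ℂ) (a : ι → ℂ) :
    commD D (c • a) = c • commD D a := by
  letI := Fintype.ofFinite ι
  letI := Classical.decEq ι
  unfold commD
  rw [Matrix.diagonal_smul]
  simp [mul_smul_comm, smul_sub, Matrix.smul_mul]

lemma commD_apply_s13 {ι : Type*} [Finite ι] (D : Matrix ι ι ℂ) (a : ι → ℂ) (u v : ι) :
    commD D a u v = D u v * (a v - a u) := by
  letI := Fintype.ofFinite ι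
  letI := Classical.decEq ι
  unfold commD
  simp [Matrix.sub_apply, Matrix.mul_diagonal, Matrix.diagonal_mul]
  ring

lemma opNorm_le_sparse {ι : Type*} [Finite ι] (M : Matrix ι ι ℂ) {C : ℝ} (hC : 0 ≤ C)
    (hrow : ∀ u v v', M u v ≠ 0 → M u v' ≠ 0 → v = v')
    (hcol : ∀ u u' v, M u v ≠ 0 → M u' v ≠ 0 → u = u')
    (hent : ∀ u v, ‖M u v‖ ≤ C) : opNorm M ≤ C := by
  letI := Fintype.ofFinite ι
  letI := Classical.decEq ι
  unfold opNorm
  refine ContinuousLinearMap.opNorm_le_bound _ hC fun x => ?_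
  have happ : ∀ u, (Matrix.toEuclideanCLM (𝕜 := ℂ) M x) u = ∑ v, M u v * x v := by
    intro u
    have := congrFun (Matrix.ofLp_toEuclideanCLM M x) u
    simpa [Matrix.toLin'_apply, Matrix.mulVec, dotProduct] using this
  have hCx : 0 ≤ C * ‖x‖ := mul_nonneg hC (norm_nonneg x)
  rw [EuclideanSpace.norm_eq]
  rw [show C * ‖x‖ = Real.sqrt ((C * ‖x‖) ^ 2) from (Real.sqrt_sq hCx).symm]
  apply Real.sqrt_le_sqrt
  have hxnorm : ‖x‖ ^ 2 = ∑ v, ‖x v‖ ^ 2 := by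
    rw [EuclideanSpace.norm_eq, Real.sq_sqrt]
    positivity
  have rowbound : ∀ u, ‖∑ v, M u v * x v‖ ^ 2 ≤ ∑ v, ‖M u v‖ ^ 2 * ‖x v‖ ^ 2 := by
    intro u
    by_cases h : ∃ v0, M u v0 ≠ 0
    · obtain ⟨v0, hv0⟩ := h
      rw [Finset.sum_eq_single v0 (fun b _ hb => by
        by_contra hb'
        exact hb (hrow u b v0 (fun h0 => hb' (by simp [h0])) hv0)) (by simp)]
      calc ‖M u v0 * x v0‖ ^ 2 = ‖M u v0‖ ^ 2 * ‖x v0‖ ^ 2 := by rw [norm_mul, mul_pow]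
        _ ≤ ∑ v, ‖M u v‖ ^ 2 * ‖x v‖ ^ 2 :=
          Finset.single_le_sum (f := fun v => ‖M u v‖ ^ 2 * ‖x v‖ ^ 2)
            (fun v _ => by positivity) (Finset.mem_univ v0)
    · push_neg at h
      simp [h]
  have colbound : ∀ v, ∑ u, ‖M u v‖ ^ 2 ≤ C ^ 2 := by
    intro v
    by_cases h : ∃ u0, M u0 v ≠ 0
    · obtain ⟨u0, hu0⟩ := h
      rw [Finset.sum_eq_single u0 (fun b _ hb => by
        by_contra hb'
        exact hb (hcol b u0 v (fun h0 => hb' (by simp [h0])) hu0)) (by simp)]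
      exact pow_le_pow_left₀ (norm_nonneg _) (hent u0 v) 2
    · push_neg at h
      simp [h]
      positivity
  calc ∑ u, ‖(Matrix.toEuclideanCLM (𝕜 := ℂ) M x) u‖ ^ 2
      ≤ ∑ u, ∑ v, ‖M u v‖ ^ 2 * ‖x v‖ ^ 2 :=
        Finset.sum_le_sum fun u _ => by rw [happ u]; exact rowbound u
    _ = ∑ v, (∑ u, ‖M u v‖ ^ 2) * ‖x v‖ ^ 2 := by
        rw [Finset.sum_comm]
        simp [Finset.sum_mul]
    _ ≤ ∑ v, C ^ 2 * ‖x v‖ ^ 2 :=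
        Finset.sum_le_sum fun v _ => mul_le_mul_of_nonneg_right (colbound v) (by positivity)
    _ = (C * ‖x‖) ^ 2 := by rw [mul_pow, ← Finset.mul_sum, hxnorm]

lemma le_ncDist {ι : Type*} [Finite ι] {D : Matrix ι ι ℂ} {a : ι → ℂ}
    (h : opNorm (commD D a) ≤ 1) (i j : ι) :
    ENNReal.ofReal ‖a i - a j‖ ≤ ncDist D i j := by
  unfold ncDist
  exact le_iSup₂ (f := fun (a : ι → ℂ) (_ : opNorm (commD D a) ≤ 1) =>
    ENNReal.ofReal ‖a i - a j‖) a h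

lemma ncDist_le {ι : Type*} [Finite ι] {D : Matrix ι ι ℂ} {i j : ι} {b : ℝ≥0∞}
    (h : ∀ a : ι → ℂ, opNorm (commD D a) ≤ 1 → ENNReal.ofReal ‖a i - a j‖ ≤ b) :
    ncDist D i j ≤ b := by
  unfold ncDist
  exact iSup₂_le h

lemma ncDist_pos {ι : Type*} [Finite ι] (D : Matrix ι ι ℂ) {i j : ι} (hij : i ≠ j) :
    0 < ncDist D i j := by
  classical
  set a : ι → ℂ := fun u => if u = i then 1 else 0 with ha
  set C := opNorm (commD D a) with hCdef
  have hmax : (0:ℝ) < max C 1 := lt_of_lt_of_le one_pos (le_max_right _ _)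
  set t : ℝ := (max C 1)⁻¹ with htdef
  have ht : 0 < t := inv_pos.mpr hmax
  have hadm : opNorm (commD D ((t:ℂ) • a)) ≤ 1 := by
    rw [commD_smul, opNorm_smul]
    have hnt : ‖(t:ℂ)‖ = t := by
      rw [Complex.norm_real, Real.norm_eq_abs, abs_of_nonneg ht.le]
    rw [hnt, ← hCdef]
    have h1 : t * C ≤ t * max C 1 := mul_le_mul_of_nonneg_left (le_max_left _ _) ht.le
    have h2 : t * max C 1 = 1 := inv_mul_cancel₀ hmax.ne'
    linarith
  have hval : ((t:ℂ) • a) i - ((t:ℂ) • a) j = (t:ℂ) := by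
    simp [ha, hij, Ne.symm hij]
  have hle := le_ncDist hadm i j
  rw [hval] at hle
  refine lt_of_lt_of_le ?_ hle
  rw [show ‖(t:ℂ)‖ = t from by rw [Complex.norm_real, Real.norm_eq_abs, abs_of_nonneg ht.le]]
  exact ENNReal.ofReal_pos.mpr ht

lemma dir {n k : ℕ} (E F : Matrix (Fin n) (Fin n) ℂ)
    (e : Fin k → Fin n × Fin n) (w : Fin k → ℝ) (hw : ∀ s, 0 < w s)
    (hends : ∀ s, (e s).1 ≠ (e s).2)
    (hdisj : ∀ s t, s ≠ t →
      (e s).1 ≠ (e t).1 ∧ (e s).1 ≠ (e t).2 ∧ (e s).2 ≠ (e t).1 ∧ (e s).2 ≠ (e t).2)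
    (hsupp : ∀ a b, (E - F) a b ≠ 0 → ∃ s, (a, b) = e s ∨ (a, b) = ((e s).2, (e s).1))
    (hnorm : ∀ s, ‖(E - F) (e s).1 (e s).2‖ ≤ (w s)⁻¹ ∧ ‖(E - F) (e s).2 (e s).1‖ ≤ (w s)⁻¹)
    (x y : Fin n) :
    ncDist F x y ≤ (1 + ⨆ s, ncDist F (e s).1 (e s).2 / ENNReal.ofReal (w s)) * ncDist E x y := by
  set m := ⨆ s, ncDist F (e s).1 (e s).2 / ENNReal.ofReal (w s) with hm
  rcases eq_or_ne x y with rfl | hxy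
  · have h0 : ncDist F x x ≤ 0 := ncDist_le (fun a _ => by simp)
    exact h0.trans zero_le
  rcases eq_or_ne m ⊤ with hmtop | hmfin
  · rw [hmtop, add_top, ENNReal.top_mul (ncDist_pos E hxy).ne']
    exact le_top
  set M' := m.toReal with hM'def
  have hM'0 : 0 ≤ M' := ENNReal.toReal_nonneg
  have hmM : m = ENNReal.ofReal M' := (ENNReal.ofReal_toReal hmfin).symm
  set Δ := E - F with hΔ
  -- support lemmas for Δ
  have hkeyr : ∀ u v v', Δ u v ≠ 0 → Δ u v' ≠ 0 → v = v' := by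
    intro u v v' h h'
    obtain ⟨s, hs⟩ := hsupp u v h
    obtain ⟨t, ht⟩ := hsupp u v' h'
    simp only [Prod.ext_iff] at hs ht
    rcases eq_or_ne s t with rfl | hst
    · rcases hs with ⟨hu1, hv1⟩ | ⟨hu1, hv1⟩ <;> rcases ht with ⟨hu2, hv2⟩ | ⟨hu2, hv2⟩
      · rw [hv1, hv2]
      · exact absurd (hu1.symm.trans hu2) (hends s)
      · exact absurd (hu2.symm.trans hu1) (hends s)
      · rw [hv1, hv2]
    · exfalso
      obtain ⟨h1, h2, h3, h4⟩ := hdisj s t hst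
      rcases hs with ⟨hu1, _⟩ | ⟨hu1, _⟩ <;> rcases ht with ⟨hu2, _⟩ | ⟨hu2, _⟩
      · exact h1 (hu1.symm.trans hu2)
      · exact h2 (hu1.symm.trans hu2)
      · exact h3 (hu1.symm.trans hu2)
      · exact h4 (hu1.symm.trans hu2)
  have hkeyc : ∀ u u' v, Δ u v ≠ 0 → Δ u' v ≠ 0 → u = u' := by
    intro u u' v h h'
    obtain ⟨s, hs⟩ := hsupp u v h
    obtain ⟨t, ht⟩ := hsupp u' v h'
    simp only [Prod.ext_iff] at hs ht
    rcases eq_or_ne s t with rfl | hst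
    · rcases hs with ⟨hu1, hv1⟩ | ⟨hu1, hv1⟩ <;> rcases ht with ⟨hu2, hv2⟩ | ⟨hu2, hv2⟩
      · rw [hu1, hu2]
      · exact absurd (hv2.symm.trans hv1) (hends s)
      · exact absurd (hv1.symm.trans hv2) (hends s)
      · rw [hu1, hu2]
    · exfalso
      obtain ⟨h1, h2, h3, h4⟩ := hdisj s t hst
      rcases hs with ⟨_, hv1⟩ | ⟨_, hv1⟩ <;> rcases ht with ⟨_, hv2⟩ | ⟨_, hv2⟩
      · exact h4 (hv1.symm.trans hv2)
      · exact h3 (hv1.symm.trans hv2)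
      · exact h2 (hv1.symm.trans hv2)
      · exact h1 (hv1.symm.trans hv2)
  refine ncDist_le fun a ha => ?_
  have hedge : ∀ s, ‖a (e s).1 - a (e s).2‖ / w s ≤ M' := by
    intro s
    have h1 : ENNReal.ofReal ‖a (e s).1 - a (e s).2‖ ≤ ncDist F (e s).1 (e s).2 :=
      le_ncDist ha _ _
    have h2 : ENNReal.ofReal ‖a (e s).1 - a (e s).2‖ / ENNReal.ofReal (w s) ≤ m :=
      le_trans (ENNReal.div_le_div_right h1 _)
        ((le_iSup (fun s => ncDist F (e s).1 (e s).2 / ENNReal.ofReal (w s)) s).trans_eq hm.symm)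
    rw [← ENNReal.ofReal_div_of_pos (hw s), hmM] at h2
    exact (ENNReal.ofReal_le_ofReal_iff hM'0).mp h2
  have hcommΔ : opNorm (commD Δ a) ≤ M' := by
    refine opNorm_le_sparse _ hM'0 ?_ ?_ ?_
    · intro u v v' h h'
      refine hkeyr u v v' (fun h0 => h ?_) (fun h0 => h' ?_) <;>
        rw [commD_apply_s13, h0, zero_mul]
    · intro u u' v h h'
      refine hkeyc u u' v (fun h0 => h ?_) (fun h0 => h' ?_) <;>
        rw [commD_apply_s13, h0, zero_mul]
    · intro u v
      rw [commD_apply_s13]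
      by_cases h : Δ u v = 0
      · simp [h, hM'0]
      · obtain ⟨s, hs⟩ := hsupp u v h
        simp only [Prod.ext_iff] at hs
        rcases hs with ⟨hu, hv⟩ | ⟨hu, hv⟩
        · subst hu; subst hv
          rw [norm_mul]
          calc ‖Δ (e s).1 (e s).2‖ * ‖a (e s).2 - a (e s).1‖
              ≤ (w s)⁻¹ * ‖a (e s).1 - a (e s).2‖ := by
                rw [norm_sub_rev]
                exact mul_le_mul_of_nonneg_right (hnorm s).1 (norm_nonneg _)
            _ = ‖a (e s).1 - a (e s).2‖ / w s := by rw [inv_mul_eq_div]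
            _ ≤ M' := hedge s
        · subst hu; subst hv
          rw [norm_mul]
          calc ‖Δ (e s).2 (e s).1‖ * ‖a (e s).1 - a (e s).2‖
              ≤ (w s)⁻¹ * ‖a (e s).1 - a (e s).2‖ :=
                mul_le_mul_of_nonneg_right (hnorm s).2 (norm_nonneg _)
            _ = ‖a (e s).1 - a (e s).2‖ / w s := by rw [inv_mul_eq_div]
            _ ≤ M' := hedge s
  have hEbound : opNorm (commD E a) ≤ 1 + M' := by
    have hEF : E = F + Δ := by rw [hΔ]; abel
    rw [hEF, commD_add]
    exact le_trans (opNorm_add_le _ _) (add_le_add ha hcommΔ)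
  have h1M : (0:ℝ) < 1 + M' := by linarith
  set c : ℝ := (1 + M')⁻¹ with hcdef
  have hc0 : 0 ≤ c := inv_nonneg.mpr h1M.le
  have hnc : ‖(c:ℂ)‖ = c := by rw [Complex.norm_real, Real.norm_eq_abs, abs_of_nonneg hc0]
  have hadm : opNorm (commD E ((c:ℂ) • a)) ≤ 1 := by
    rw [commD_smul, opNorm_smul, hnc]
    calc c * opNorm (commD E a) ≤ c * (1 + M') :=
          mul_le_mul_of_nonneg_left hEbound hc0
      _ = 1 := inv_mul_cancel₀ h1M.ne'
  have hle := le_ncDist hadm x y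
  have hval : ‖((c:ℂ) • a) x - ((c:ℂ) • a) y‖ = c * ‖a x - a y‖ := by
    have : ((c:ℂ) • a) x - ((c:ℂ) • a) y = (c:ℂ) * (a x - a y) := by
      simp [mul_sub]
    rw [this, norm_mul, hnc]
  rw [hval] at hle
  calc ENNReal.ofReal ‖a x - a y‖
      = ENNReal.ofReal ((1 + M') * (c * ‖a x - a y‖)) := by
        rw [← mul_assoc, mul_inv_cancel₀ h1M.ne', one_mul]
    _ = ENNReal.ofReal (1 + M') * ENNReal.ofReal (c * ‖a x - a y‖) :=
        ENNReal.ofReal_mul h1M.le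
    _ ≤ ENNReal.ofReal (1 + M') * ncDist E x y := mul_le_mul_right hle _
    _ = (1 + m) * ncDist E x y := by
        rw [ENNReal.ofReal_add zero_le_one hM'0, ENNReal.ofReal_one, hmM]

end Aux

theorem stmt13 {n k : ℕ} (D D' : Matrix (Fin n) (Fin n) ℂ)
    (hherm : D.IsHermitian) (hdiag : ∀ i, D i i = 0)
    (hherm' : D'.IsHermitian) (hdiag' : ∀ i, D' i i = 0)
    (e : Fin k → Fin n × Fin n) (w : Fin k → ℝ) (hw : ∀ s, 0 < w s)
    (hends : ∀ s, (e s).1 ≠ (e s).2)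
    (hdisj : ∀ s t, s ≠ t →
      (e s).1 ≠ (e t).1 ∧ (e s).1 ≠ (e t).2 ∧ (e s).2 ≠ (e t).1 ∧ (e s).2 ≠ (e t).2)
    (hagree : ∀ a b : Fin n,
      (∀ s, ¬ ((a, b) = e s ∨ (a, b) = ((e s).2, (e s).1))) → D' a b = D a b)
    (hzero : ∀ s, D' (e s).1 (e s).2 = 0 ∧ D' (e s).2 (e s).1 = 0)
    (habs : ∀ s, ‖D (e s).1 (e s).2‖ = (w s)⁻¹)
    (hconn : ∀ x y, Conn D x y) (hconn' : ∀ x y, Conn D' x y)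
    (x y : Fin n) :
    ncDist D x y / (1 + ⨆ s, ncDist D (e s).1 (e s).2 / ENNReal.ofReal (w s)) ≤
      ncDist D' x y ∧
    ncDist D' x y ≤
      (1 + ⨆ s, ncDist D' (e s).1 (e s).2 / ENNReal.ofReal (w s)) * ncDist D x y := by
  have hΔsupp : ∀ a b, (D - D') a b ≠ 0 →
      ∃ s, (a, b) = e s ∨ (a, b) = ((e s).2, (e s).1) := by
    intro a b h
    by_contra hc
    push_neg at hc
    exact h (by rw [Matrix.sub_apply, hagree a b (fun s => not_or.mpr ⟨(hc s).1, (hc s).2⟩), sub_self])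
  have hΔsupp' : ∀ a b, (D' - D) a b ≠ 0 →
      ∃ s, (a, b) = e s ∨ (a, b) = ((e s).2, (e s).1) := by
    intro u v h
    apply hΔsupp u v
    intro h0
    apply h
    rw [Matrix.sub_apply] at h0 ⊢
    rw [sub_eq_zero] at h0 ⊢
    exact h0.symm
  have hDnorm : ∀ s, ‖D (e s).2 (e s).1‖ = (w s)⁻¹ := by
    intro s
    rw [← hherm.apply (e s).2 (e s).1, norm_star, habs s]
  have hnorm1 : ∀ s, ‖(D - D') (e s).1 (e s).2‖ ≤ (w s)⁻¹ ∧
      ‖(D - D') (e s).2 (e s).1‖ ≤ (w s)⁻¹ := by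
    intro s
    rw [Matrix.sub_apply, Matrix.sub_apply, (hzero s).1, (hzero s).2, sub_zero, sub_zero]
    exact ⟨le_of_eq (habs s), le_of_eq (hDnorm s)⟩
  have hnorm2 : ∀ s, ‖(D' - D) (e s).1 (e s).2‖ ≤ (w s)⁻¹ ∧
      ‖(D' - D) (e s).2 (e s).1‖ ≤ (w s)⁻¹ := by
    intro s
    simp only [Matrix.sub_apply, (hzero s).1, (hzero s).2, zero_sub, norm_neg]
    exact ⟨le_of_eq (habs s), le_of_eq (hDnorm s)⟩
  constructor
  · have h := dir D' D e w hw hends hdisj hΔsupp' hnorm2 x y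
    exact ENNReal.div_le_of_le_mul (h.trans_eq (mul_comm _ _))
  · exact dir D D' e w hw hends hdisj hΔsupp hnorm1 x y
end

section
/- Let G = (V,E) be a finite connected undirected graph with a weight function w : E → (0,∞), and let ℓ^w denote the induced weighted shortest-path distance on V. Then for any two vertices i, j: sup{ |a(i) − a(j)| : a : V → ℂ such that |a(u) − a(v)| ≤ w({u,v}) for every edge {u,v} ∈ E } = ℓ^w(i,j). (This expresses that the noncommutative distance of the split-graph spectral triple equals the geodesic distance.) -/
open scoped ENNReal

theorem stmt15 {V : Type*} [Fintype V] (G : SimpleGraph V) (hG : G.Connected)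
    (w : Sym2 V → ℝ) (hw : ∀ e ∈ G.edgeSet, 0 < w e) (i j : V) :
    (⨆ (a : V → ℂ) (_ : ∀ u v : V, G.Adj u v → ‖a u - a v‖ ≤ w s(u, v)),
        ENNReal.ofReal ‖a i - a j‖) =
      ⨅ (p : G.Walk i j), ENNReal.ofReal ((p.edges.map w).sum) := by
  have hsum : ∀ {u v : V} (p : G.Walk u v), 0 ≤ (p.edges.map w).sum := by
    intro u v p
    apply List.sum_nonneg
    intro x hx
    simp only [List.mem_map] at hx
    obtain ⟨e, he, rfl⟩ := hx
    exact (hw e (p.edges_subset_edgeSet he)).le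
  have hub : ∀ (a : V → ℂ), (∀ u v : V, G.Adj u v → ‖a u - a v‖ ≤ w s(u, v)) →
      ∀ {u v : V} (p : G.Walk u v), ‖a u - a v‖ ≤ (p.edges.map w).sum := by
    intro a ha u v p
    induction p with
    | nil => simp
    | cons h q ih =>
      rename_i x y z
      calc ‖a x - a z‖ ≤ ‖a x - a y‖ + ‖a y - a z‖ := by
            have he : a x - a z = (a x - a y) + (a y - a z) := by ring
            rw [he]; exact norm_add_le _ _
        _ ≤ w s(x, y) + (q.edges.map w).sum := add_le_add (ha x y h) ih
        _ = ((SimpleGraph.Walk.cons h q).edges.map w).sum := by simp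
  set D : V → ℝ≥0∞ :=
    fun v => ⨅ p : G.Walk i v, ENNReal.ofReal ((p.edges.map w).sum) with hDdef
  have hDfin : ∀ v, D v ≠ ⊤ := by
    intro v
    obtain ⟨p⟩ := hG i v
    exact ne_top_of_le_ne_top ENNReal.ofReal_ne_top (iInf_le _ p)
  have hDi : D i = 0 := by
    refine le_antisymm ?_ zero_le
    have := iInf_le (fun p : G.Walk i i => ENNReal.ofReal ((p.edges.map w).sum))
      SimpleGraph.Walk.nil
    simpa using this
  have hstep : ∀ u v : V, G.Adj u v → D v ≤ D u + ENNReal.ofReal (w s(u, v)) := by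
    intro u v huv
    rw [hDdef, ENNReal.iInf_add]
    refine le_iInf fun p => ?_
    have := iInf_le (fun q : G.Walk i v => ENNReal.ofReal ((q.edges.map w).sum))
      (p.concat huv)
    refine le_trans this (le_of_eq ?_)
    rw [SimpleGraph.Walk.edges_concat]
    simp [ENNReal.ofReal_add (hsum p) (hw _ (G.mem_edgeSet.mpr huv)).le]
  have hstepR : ∀ u v : V, G.Adj u v → (D v).toReal ≤ (D u).toReal + w s(u, v) := by
    intro u v huv
    have h := hstep u v huv
    have : (D v).toReal ≤ (D u + ENNReal.ofReal (w s(u, v))).toReal :=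
      ENNReal.toReal_mono (by simp [hDfin u, ENNReal.ofReal_ne_top, ENNReal.add_ne_top]) h
    rwa [ENNReal.toReal_add (hDfin u) ENNReal.ofReal_ne_top,
      ENNReal.toReal_ofReal (hw _ (G.mem_edgeSet.mpr huv)).le] at this
  set a : V → ℂ := fun v => ((D v).toReal : ℂ) with hadef
  have ha : ∀ u v : V, G.Adj u v → ‖a u - a v‖ ≤ w s(u, v) := by
    intro u v huv
    have h1 := hstepR u v huv
    have h2 := hstepR v u huv.symm
    rw [Sym2.eq_swap] at h2
    have : a u - a v = (((D u).toReal - (D v).toReal : ℝ) : ℂ) := by push_cast [hadef]; ring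
    rw [this, Complex.norm_real, Real.norm_eq_abs, abs_sub_le_iff]
    constructor <;> linarith
  refine le_antisymm ?_ ?_
  · refine iSup_le fun b => iSup_le fun hb => le_iInf fun p => ?_
    exact ENNReal.ofReal_le_ofReal (hub b hb p)
  · have key : ENNReal.ofReal ‖a i - a j‖ = D j := by
      have : a i - a j = (((D i).toReal - (D j).toReal : ℝ) : ℂ) := by push_cast [hadef]; ring
      rw [this, Complex.norm_real, Real.norm_eq_abs, hDi]
      simp [abs_of_nonneg ENNReal.toReal_nonneg, ENNReal.ofReal_toReal (hDfin j)]
    calc (⨅ p : G.Walk i j, ENNReal.ofReal ((p.edges.map w).sum)) = D j := rfl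
      _ = ENNReal.ofReal ‖a i - a j‖ := key.symm
      _ ≤ _ := le_iSup₂ (f := fun (b : V → ℂ)
            (_ : ∀ u v : V, G.Adj u v → ‖b u - b v‖ ≤ w s(u, v)) =>
            ENNReal.ofReal ‖b i - b j‖) a ha
end
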